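/- Reciprocal clustering satisfies the Axiom of Transformation: if φ : X → Y is a dissimilarity-reducing map between networks (X, A_X) and (Y, A_Y), i.e., A_X(x,x') ≥ A_Y(φ(x), φ(x')) for all x, x' ∈ X, then u^R_X(x,x') ≥ u^R_Y(φ(x), φ(x')) for all x, x' ∈ X. -/
import Mathlib


/-- Maximum dissimilarity over consecutive links of a chain (list of nodes). -/
def listCost {X : Type*} (A : X → X → ℝ) (l : List X) : ℝ :=
  (l.zip l.tail).foldr (fun p r => max (A p.1 p.2) r) 0

/-- Minimum over chains from `x` to `x'` of the maximum link cost. -/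
noncomputable def minChainCost {X : Type*} (A : X → X → ℝ) (x x' : X) : ℝ :=
  sInf {c : ℝ | ∃ l : List X, l.head? = some x ∧ l.getLast? = some x' ∧ listCost A l = c}

/-- Symmetrized dissimilarity Ā. -/
def symDis {X : Type*} (A : X → X → ℝ) (x x' : X) : ℝ := max (A x x') (A x' x)

/-- Reciprocal ultrametric. -/
noncomputable def uR {X : Type*} (A : X → X → ℝ) (x x' : X) : ℝ := minChainCost (symDis A) x x'

/-- Nonreciprocal ultrametric. -/
noncomputable def uNR {X : Type*} (A : X → X → ℝ) (x x' : X) : ℝ :=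
  max (minChainCost A x x') (minChainCost A x' x)

/-- A (finite, asymmetric) network dissimilarity: nonnegative, vanishing exactly on the diagonal. -/
def IsNetwork {X : Type*} (A : X → X → ℝ) : Prop :=
  (∀ x x', 0 ≤ A x x') ∧ (∀ x x', A x x' = 0 ↔ x = x')

/-- Ultrametric: nonnegative, symmetric, identity of indiscernibles, strong triangle inequality. -/
def IsUltra {X : Type*} (u : X → X → ℝ) : Prop :=
  (∀ x x', 0 ≤ u x x') ∧ (∀ x x', u x x' = u x' x) ∧
  (∀ x x', u x x' = 0 ↔ x = x') ∧
  (∀ x x' x'', u x x' ≤ max (u x x'') (u x'' x'))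


lemma listCost_nonneg {X : Type*} (A : X → X → ℝ) (l : List X) :
    0 ≤ listCost A l := by
  unfold listCost
  induction (l.zip l.tail) with
  | nil => simp
  | cons p t ih => simpa using Or.inr ih

lemma listCost_map_le {X Y : Type*} (A : X → X → ℝ) (B : Y → Y → ℝ) (φ : X → Y)
    (h : ∀ a b, B (φ a) (φ b) ≤ A a b) :
    ∀ l : List X, listCost B (l.map φ) ≤ listCost A l := by
  intro l
  induction l with
  | nil => simp [listCost]
  | cons a t ih =>
    cases t with
    | nil => simp [listCost]
    | cons b t' =>
      have h1 : listCost A (a :: b :: t') = max (A a b) (listCost A (b :: t')) := rfl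
      have h2 : listCost B ((a :: b :: t').map φ)
          = max (B (φ a) (φ b)) (listCost B ((b :: t').map φ)) := rfl
      rw [h1, h2]
      exact max_le_max (h a b) ih

theorem reciprocal_axiom_of_transformation {X Y : Type*} [Fintype X] [Fintype Y]
    (A_X : X → X → ℝ) (A_Y : Y → Y → ℝ) (hX : IsNetwork A_X) (hY : IsNetwork A_Y)
    (φ : X → Y) (hφ : ∀ x x' : X, A_Y (φ x) (φ x') ≤ A_X x x') :
    ∀ x x' : X, uR A_Y (φ x) (φ x') ≤ uR A_X x x' := by
  intro x x'
  have hsym : ∀ a b : X, symDis A_Y (φ a) (φ b) ≤ symDis A_X a b := by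
    intro a b
    exact max_le_max (hφ a b) (hφ b a)
  apply le_csInf
  · exact ⟨listCost (symDis A_X) [x, x'], [x, x'], rfl, rfl, rfl⟩
  · rintro c ⟨l, hh, hl, rfl⟩
    have hmem : listCost (symDis A_Y) (l.map φ) ∈
        {c : ℝ | ∃ m : List Y, m.head? = some (φ x) ∧ m.getLast? = some (φ x') ∧
          listCost (symDis A_Y) m = c} := by
      exact ⟨l.map φ, by simp [hh], by simp [List.getLast?_map, hl], rfl⟩
    have hbdd : BddBelow {c : ℝ | ∃ m : List Y, m.head? = some (φ x) ∧ m.getLast? = some (φ x') ∧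
          listCost (symDis A_Y) m = c} := by
      refine ⟨0, ?_⟩
      rintro c ⟨m, _, _, rfl⟩
      exact listCost_nonneg _ m
    calc uR A_Y (φ x) (φ x') ≤ listCost (symDis A_Y) (l.map φ) := csInf_le hbdd hmem
      _ ≤ listCost (symDis A_X) l := listCost_map_le _ _ φ hsym l
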